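/- Let ψ: ℕ → [0,1) be a decreasing function and θ = (θ₁,θ₂) ∈ [0,1]². Then for every ℓ ∈ ℕ, the set S×₂(ψ;θ) ∩ [0,1]² is contained in the union, over integers t ≥ ℓ, over integers q with 2^t ≤ q < 2^{t+1}, over integers m ∈ ℤ with 2^{|m|}√(ψ(2^t)) ≤ 1, and over p₁, p₂ ∈ {−1, 0, …, q}, of the rectangles S_θ(q,m,p₁,p₂) consisting of all (x₁,x₂) ∈ [0,1]² with |x₁ − (p₁+θ₁)/q| < 2^m √(2ψ(2^t)) / 2^t and |x₂ − (p₂+θ₂)/q| < 2^{−m} √(2ψ(2^t)) / 2^t. -/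
import Mathlib

noncomputable def distNearestInt (x : ℝ) : ℝ := |x - round x|

def multApprox2 (ψ : ℕ → ℝ) (θ : ℝ × ℝ) : Set (ℝ × ℝ) :=
  {x : ℝ × ℝ |
    {q : ℕ | 0 < q ∧
      distNearestInt (q * x.1 - θ.1) * distNearestInt (q * x.2 - θ.2) < ψ q}.Infinite}

def coverRect (ψ : ℕ → ℝ) (θ : ℝ × ℝ) (t q : ℕ) (m p₁ p₂ : ℤ) : Set (ℝ × ℝ) :=
  {x : ℝ × ℝ | x ∈ Set.Icc ((0 : ℝ), (0 : ℝ)) (1, 1) ∧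
    |x.1 - (p₁ + θ.1) / q| < 2 ^ m * Real.sqrt (2 * ψ (2 ^ t)) / 2 ^ t ∧
    |x.2 - (p₂ + θ.2) / q| < 2 ^ (-m) * Real.sqrt (2 * ψ (2 ^ t)) / 2 ^ t}

lemma keyAux (ψt δ₁ δ₂ : ℝ) (h0' : 0 ≤ δ₂)
    (hs : Real.sqrt (2*ψt) ≤ δ₁) (h1 : δ₁ ≤ 1/2)
    (hprod : δ₁ * δ₂ < ψt) :
    ∃ m : ℤ, 0 ≤ m ∧ (2:ℝ)^m * Real.sqrt (2*ψt) ≤ 1 ∧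
      δ₁ < 2^m * Real.sqrt (2*ψt) ∧ δ₂ < 2^(-m) * Real.sqrt (2*ψt) := by
  have h0 : 0 ≤ δ₁ := le_trans (Real.sqrt_nonneg _) hs
  have hψpos : 0 < ψt := lt_of_le_of_lt (mul_nonneg h0 h0') hprod
  set s := Real.sqrt (2*ψt) with hs_def
  have hspos : 0 < s := Real.sqrt_pos.mpr (by linarith)
  have hsq : s^2 = 2*ψt := Real.sq_sqrt (by linarith)
  have hδ1pos : 0 < δ₁ := lt_of_lt_of_le hspos hs
  set r := δ₁ / s with hr_def
  have hr1 : 1 ≤ r := (one_le_div hspos).mpr hs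
  set k := Int.log 2 r with hk
  have hk0 : 0 ≤ k := by simpa using Int.log_mono_right (b := 2) one_pos hr1
  have hlow : (2:ℝ)^k ≤ r := by
    have := Int.zpow_log_le_self (b := 2) (by norm_num) (by linarith : (0:ℝ) < r)
    simpa using this
  have hhigh : r < (2:ℝ)^(k+1) := by
    have := Int.lt_zpow_succ_log_self (b := 2) (by norm_num) r
    simpa using this
  have hP : (0:ℝ) < (2:ℝ)^k := zpow_pos (by norm_num) _
  have h2k1 : (2:ℝ)^(k+1) = 2 * (2:ℝ)^k := by
    rw [zpow_add_one₀ (by norm_num : (2:ℝ) ≠ 0)]; ring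
  have hneg : (2:ℝ)^(-(k+1)) = 1 / (2 * (2:ℝ)^k) := by
    rw [zpow_neg, h2k1]; rw [one_div]
  have hlow' : (2:ℝ)^k * s ≤ δ₁ := by
    rw [hr_def] at hlow
    calc (2:ℝ)^k * s ≤ (δ₁/s) * s := by gcongr
    _ = δ₁ := by field_simp
  have hhigh' : δ₁ < 2 * (2:ℝ)^k * s := by
    rw [hr_def, div_lt_iff₀ hspos, h2k1] at hhigh
    linarith
  refine ⟨k+1, by omega, ?_, ?_, ?_⟩
  · rw [h2k1]; linarith
  · rw [h2k1]; linarith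
  · rw [hneg]
    rw [div_mul_eq_mul_div, lt_div_iff₀ (by positivity)]
    nlinarith [mul_le_mul_of_nonneg_right hlow' h0', mul_pos hP hspos]

lemma keyMain (ψt δ₁ δ₂ : ℝ) (h0 : 0 ≤ δ₁) (h0' : 0 ≤ δ₂)
    (h1 : δ₁ ≤ 1/2) (h2 : δ₂ ≤ 1/2) (hψ1 : ψt < 1)
    (hprod : δ₁ * δ₂ < ψt) :
    ∃ m : ℤ, (2:ℝ)^|m| * Real.sqrt ψt ≤ 1 ∧
      δ₁ < 2^m * Real.sqrt (2*ψt) ∧ δ₂ < 2^(-m) * Real.sqrt (2*ψt) := by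
  have hψpos : 0 < ψt := lt_of_le_of_lt (mul_nonneg h0 h0') hprod
  have hsle : Real.sqrt ψt ≤ Real.sqrt (2*ψt) := Real.sqrt_le_sqrt (by linarith)
  by_cases hc1 : Real.sqrt (2*ψt) ≤ δ₁
  · obtain ⟨m, hm0, hm1, hm2, hm3⟩ := keyAux ψt δ₁ δ₂ h0' hc1 h1 hprod
    refine ⟨m, ?_, hm2, hm3⟩
    rw [abs_of_nonneg hm0]
    calc (2:ℝ)^m * Real.sqrt ψt ≤ (2:ℝ)^m * Real.sqrt (2*ψt) := by gcongr
      _ ≤ 1 := hm1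
  · by_cases hc2 : Real.sqrt (2*ψt) ≤ δ₂
    · obtain ⟨m, hm0, hm1, hm2, hm3⟩ := keyAux ψt δ₂ δ₁ h0 hc2 h2
        (by rw [mul_comm]; exact hprod)
      refine ⟨-m, ?_, ?_, ?_⟩
      · rw [abs_neg, abs_of_nonneg hm0]
        calc (2:ℝ)^m * Real.sqrt ψt ≤ (2:ℝ)^m * Real.sqrt (2*ψt) := by gcongr
          _ ≤ 1 := hm1
      · rw [show (-m : ℤ) = -m from rfl]; exact hm3
      · rw [neg_neg]; exact hm2
    · push_neg at hc1 hc2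
      refine ⟨0, ?_, ?_, ?_⟩
      · simp only [abs_zero, zpow_zero, one_mul]
        exact Real.sqrt_le_one.mpr hψ1.le
      · simpa using hc1
      · simpa using hc2

lemma rect_coord (q t : ℕ) (hq : 0 < q) (hqt : 2 ^ t ≤ q) (x θi c : ℝ)
    (h : distNearestInt (q * x - θi) < c) :
    |x - ((round ((q : ℝ) * x - θi) : ℝ) + θi) / q| < c / 2 ^ t := by
  have hqR : (0:ℝ) < q := by exact_mod_cast hq
  have hqtR : ((2:ℝ)) ^ t ≤ (q:ℝ) := by exact_mod_cast hqt
  have h2t : (0:ℝ) < 2 ^ t := by positivity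
  have heq : x - ((round ((q : ℝ) * x - θi) : ℝ) + θi) / q
      = ((q:ℝ) * x - θi - round ((q : ℝ) * x - θi)) / q := by
    field_simp
    ring
  rw [heq, abs_div, abs_of_pos hqR]
  have hd0 : 0 ≤ distNearestInt (q * x - θi) := abs_nonneg _
  calc |(q:ℝ) * x - θi - round ((q : ℝ) * x - θi)| / q
      = distNearestInt (q * x - θi) / q := rfl
    _ ≤ distNearestInt (q * x - θi) / 2 ^ t := by gcongr
    _ < c / 2 ^ t := by gcongr

lemma round_bounds (y B : ℝ) (q : ℤ) (hB : B ≤ (q:ℝ)) (hl : -1 ≤ y) (hr : y ≤ B) :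
    -1 ≤ round y ∧ round y ≤ q := by
  have h := abs_sub_round y
  have h' := abs_le.mp h
  constructor
  · have : (-2:ℝ) < (round y : ℝ) := by linarith [h'.1, h'.2]
    have : (-2:ℤ) < round y := by exact_mod_cast this
    omega
  · have : ((round y : ℤ) : ℝ) < (q:ℝ) + 1 := by push_cast; linarith [h'.1, h'.2]
    have : round y < q + 1 := by exact_mod_cast this
    omega

theorem covering_lemma (ψ : ℕ → ℝ) (hψ : ∀ q, 0 ≤ ψ q ∧ ψ q < 1) (hψmono : Antitone ψ)
    (θ : ℝ × ℝ) (hθ : θ ∈ Set.Icc ((0 : ℝ), (0 : ℝ)) (1, 1)) (ℓ : ℕ) (hℓ : 0 < ℓ) :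
    multApprox2 ψ θ ∩ Set.Icc (0, 0) (1, 1) ⊆
      ⋃ (t : ℕ) (_ : ℓ ≤ t) (q : ℕ) (_ : 2 ^ t ≤ q ∧ q < 2 ^ (t + 1))
        (m : ℤ) (_ : (2 : ℝ) ^ |m| * Real.sqrt (ψ (2 ^ t)) ≤ 1)
        (p₁ : ℤ) (_ : -1 ≤ p₁ ∧ p₁ ≤ (q : ℤ))
        (p₂ : ℤ) (_ : -1 ≤ p₂ ∧ p₂ ≤ (q : ℤ)),
        coverRect ψ θ t q m p₁ p₂ := by
  rintro x ⟨hx_app, hx_box⟩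
  obtain ⟨q, hq_mem, hq_big⟩ := Set.Infinite.exists_gt hx_app (2 ^ ℓ)
  obtain ⟨hq0, hq_approx⟩ := hq_mem
  have h1 : 2 ^ Nat.log 2 q ≤ q := Nat.pow_log_le_self 2 hq0.ne'
  have h2 : q < 2 ^ (Nat.log 2 q + 1) := Nat.lt_pow_succ_log_self (by norm_num) q
  have hℓt : ℓ ≤ Nat.log 2 q := by
    have := Nat.log_mono_right (b := 2) hq_big.le
    simpa [Nat.log_pow] using this
  have hψt1 : ψ (2 ^ Nat.log 2 q) < 1 := (hψ _).2
  have hδ1_nonneg : 0 ≤ distNearestInt (q * x.1 - θ.1) := abs_nonneg _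
  have hδ2_nonneg : 0 ≤ distNearestInt (q * x.2 - θ.2) := abs_nonneg _
  have hδ1_half : distNearestInt (q * x.1 - θ.1) ≤ 1 / 2 := abs_sub_round _
  have hδ2_half : distNearestInt (q * x.2 - θ.2) ≤ 1 / 2 := abs_sub_round _
  have hprod : distNearestInt (q * x.1 - θ.1) * distNearestInt (q * x.2 - θ.2)
      < ψ (2 ^ Nat.log 2 q) := lt_of_lt_of_le hq_approx (hψmono h1)
  obtain ⟨m, hm1, hm2, hm3⟩ := keyMain (ψ (2 ^ Nat.log 2 q)) _ _ hδ1_nonneg hδ2_nonneg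
    hδ1_half hδ2_half hψt1 hprod
  have hx1l : (0:ℝ) ≤ x.1 := hx_box.1.1
  have hx2l : (0:ℝ) ≤ x.2 := hx_box.1.2
  have hx1r : x.1 ≤ 1 := hx_box.2.1
  have hx2r : x.2 ≤ 1 := hx_box.2.2
  have hθ1l : (0:ℝ) ≤ θ.1 := hθ.1.1
  have hθ2l : (0:ℝ) ≤ θ.2 := hθ.1.2
  have hθ1r : θ.1 ≤ 1 := hθ.2.1
  have hθ2r : θ.2 ≤ 1 := hθ.2.2
  have hqR : (0:ℝ) < q := by exact_mod_cast hq0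
  have hy1l : (-1:ℝ) ≤ q * x.1 - θ.1 := by nlinarith
  have hy1r : (q:ℝ) * x.1 - θ.1 ≤ q := by nlinarith
  have hy2l : (-1:ℝ) ≤ q * x.2 - θ.2 := by nlinarith
  have hy2r : (q:ℝ) * x.2 - θ.2 ≤ q := by nlinarith
  obtain ⟨hp1l, hp1r⟩ := round_bounds _ _ (q : ℤ) (by simp) hy1l hy1r
  obtain ⟨hp2l, hp2r⟩ := round_bounds _ _ (q : ℤ) (by simp) hy2l hy2r
  have hrect1 := rect_coord q (Nat.log 2 q) hq0 h1 x.1 θ.1 _ hm2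
  have hrect2 := rect_coord q (Nat.log 2 q) hq0 h1 x.2 θ.2 _ hm3
  simp only [Set.mem_iUnion]
  refine ⟨Nat.log 2 q, hℓt, q, ⟨h1, h2⟩, m, hm1,
    round ((q:ℝ) * x.1 - θ.1), ⟨hp1l, hp1r⟩,
    round ((q:ℝ) * x.2 - θ.2), ⟨hp2l, hp2r⟩, hx_box, ?_, ?_⟩
  · calc |x.1 - ((round ((q:ℝ) * x.1 - θ.1) : ℝ) + θ.1) / q|
        < 2 ^ m * Real.sqrt (2 * ψ (2 ^ Nat.log 2 q)) / 2 ^ Nat.log 2 q := hrect1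
      _ = _ := by rfl
  · calc |x.2 - ((round ((q:ℝ) * x.2 - θ.2) : ℝ) + θ.2) / q|
        < 2 ^ (-m) * Real.sqrt (2 * ψ (2 ^ Nat.log 2 q)) / 2 ^ Nat.log 2 q := hrect2
      _ = _ := by rfl
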